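/- arXiv:0807.5080 — 2 statements merged into one kernel-verified Lean document; each statement's English description precedes it below -/
import Mathlib

section
/- Let S ≥ 2, β > 0, λ ∈ ℝ. Define the mean-field free energy F^{mf}(ρ) = (1/2)Σ_{s≠s'} ρ_s ρ_{s'} − λ Σ_s ρ_s + (1/β) Σ_s ρ_s(log ρ_s − 1) for ρ ∈ (ℝ≥0)^S, and suppose F^{mf} attains a finite infimum m over (ℝ≥0)^S. Let X be a finite set, J : X×X → ℝ≥0 symmetric with Σ_y J(x,y) = 1 for all x, and define for ρ : X → (ℝ≥0)^S the functional F(ρ) = Σ_x [ e^{mf}((Jρ)(x)) − (1/β) 𝒮(ρ(x)) ], where e^{mf}(u) = (1/2)Σ_{s≠s'} u_s u_{s'} − λ Σ_s u_s and 𝒮(u) = −Σ_s u_s(log u_s − 1), and (Jρ)(x,s) = Σ_y J(x,y)ρ(y,s). Then F(ρ) ≥ |X|·m for every ρ, with equality when ρ is constantly equal to a minimizer of F^{mf}. -/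
open Finset

theorem stmt10 (S : ℕ) (hS : 2 ≤ S) (β lam : ℝ) (hβ : 0 < β) (m : ℝ)
    {X : Type*} [Fintype X] (J : X → X → ℝ)
    (hJsym : ∀ x y, J x y = J y x) (hJ0 : ∀ x y, 0 ≤ J x y)
    (hJ1 : ∀ x, ∑ y, J x y = 1)
    (Fmf : (Fin S → ℝ) → ℝ)
    (hFmf : ∀ u, Fmf u = (1/2) * ∑ s, ∑ s' ∈ univ.erase s, u s * u s'
        - lam * ∑ s, u s + (1/β) * ∑ s, u s * (Real.log (u s) - 1))
    (hlow : ∀ u : Fin S → ℝ, (∀ s, 0 ≤ u s) → m ≤ Fmf u)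
    (hatt : ∃ u : Fin S → ℝ, (∀ s, 0 ≤ u s) ∧ Fmf u = m)
    (emf : (Fin S → ℝ) → ℝ)
    (hemf : ∀ u, emf u = (1/2) * ∑ s, ∑ s' ∈ univ.erase s, u s * u s' - lam * ∑ s, u s)
    (Ent : (Fin S → ℝ) → ℝ)
    (hEnt : ∀ u, Ent u = -∑ s, u s * (Real.log (u s) - 1))
    (F : (X → Fin S → ℝ) → ℝ)
    (hF : ∀ ρ, F ρ = ∑ x, (emf (fun s => ∑ y, J x y * ρ y s) - (1/β) * Ent (ρ x))) :
    (∀ ρ : X → Fin S → ℝ, (∀ x s, 0 ≤ ρ x s) → (Fintype.card X : ℝ) * m ≤ F ρ) ∧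
      (∀ u : Fin S → ℝ, (∀ s, 0 ≤ u s) → Fmf u = m →
        F (fun _ => u) = (Fintype.card X : ℝ) * m) := by
  -- basic identity : emf u = Fmf u + (1/β) * Ent u
  have hkey : ∀ u, emf u = Fmf u + (1/β) * Ent u := by
    intro u; rw [hemf, hFmf, hEnt]; ring
  -- concavity of φ(t) = t + negMulLog t
  have hφ : ConcaveOn ℝ (Set.Ici (0:ℝ)) (fun t => t + Real.negMulLog t) := by
    exact (concaveOn_id (convex_Ici 0)).add Real.concaveOn_negMulLog
  have hEnt' : ∀ u : Fin S → ℝ, Ent u = ∑ s, (u s + Real.negMulLog (u s)) := by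
    intro u; rw [hEnt, ← Finset.sum_neg_distrib]
    refine Finset.sum_congr rfl fun s _ => ?_
    rw [Real.negMulLog]; ring
  constructor
  · intro ρ hρ
    have hJcol : ∀ y : X, ∑ x, J x y = 1 := by
      intro y; rw [show (∑ x, J x y) = ∑ x, J y x from Finset.sum_congr rfl fun x _ => hJsym x y, hJ1]
    -- Jensen per x
    have hJen : ∀ x, ∑ y, J x y * Ent (ρ y) ≤ Ent (fun s => ∑ y, J x y * ρ y s) := by
      intro x
      have := fun s : Fin S => hφ.le_map_sum (t := univ) (w := fun y => J x y)
        (p := fun y => ρ y s) (fun y _ => hJ0 x y) (hJ1 x) (fun y _ => hρ y s)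
      calc ∑ y, J x y * Ent (ρ y) = ∑ s, ∑ y, J x y * (ρ y s + Real.negMulLog (ρ y s)) := by
            rw [Finset.sum_comm]
            exact Finset.sum_congr rfl fun y _ => by rw [hEnt' (ρ y), Finset.mul_sum]
        _ ≤ ∑ s, ((∑ y, J x y * ρ y s) + Real.negMulLog (∑ y, J x y * ρ y s)) := by
            refine Finset.sum_le_sum fun s _ => ?_
            simpa [smul_eq_mul] using this s
        _ = Ent (fun s => ∑ y, J x y * ρ y s) := by rw [hEnt']
    have hnn : ∀ x (s : Fin S), (0:ℝ) ≤ ∑ y, J x y * ρ y s := fun x s =>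
      Finset.sum_nonneg fun y _ => mul_nonneg (hJ0 x y) (hρ y s)
    have hFρ : F ρ = ∑ x, (Fmf (fun s => ∑ y, J x y * ρ y s)
        + (1/β) * (Ent (fun s => ∑ y, J x y * ρ y s) - Ent (ρ x))) := by
      rw [hF]; refine Finset.sum_congr rfl fun x _ => ?_
      rw [hkey]; ring
    rw [hFρ, Finset.sum_add_distrib]
    have h1 : (Fintype.card X : ℝ) * m ≤ ∑ x, Fmf (fun s => ∑ y, J x y * ρ y s) := by
      calc (Fintype.card X : ℝ) * m = ∑ _x : X, m := by
            rw [Finset.sum_const, nsmul_eq_mul, Finset.card_univ]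
        _ ≤ _ := Finset.sum_le_sum fun x _ => hlow _ (hnn x)
    have h2 : (0:ℝ) ≤ ∑ x, (1/β) * (Ent (fun s => ∑ y, J x y * ρ y s) - Ent (ρ x)) := by
      rw [← Finset.mul_sum]
      refine mul_nonneg (by positivity) ?_
      rw [Finset.sum_sub_distrib, sub_nonneg]
      calc ∑ x, Ent (ρ x) = ∑ y, (∑ x, J x y) * Ent (ρ y) := by
            refine Finset.sum_congr rfl fun y _ => by rw [hJcol, one_mul]
        _ = ∑ x, ∑ y, J x y * Ent (ρ y) := by
            rw [Finset.sum_comm]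
            exact Finset.sum_congr rfl fun y _ => by rw [Finset.sum_mul]
        _ ≤ ∑ x, Ent (fun s => ∑ y, J x y * ρ y s) := Finset.sum_le_sum fun x _ => hJen x
    linarith
  · intro u hu hum
    rw [hF]
    have hconst : ∀ x : X, (fun s => ∑ y, J x y * u s) = u := by
      intro x; funext s; rw [← Finset.sum_mul, hJ1, one_mul]
    calc ∑ x : X, (emf (fun s => ∑ y, J x y * u s) - (1/β) * Ent u)
        = ∑ _x : X, Fmf u := by
          refine Finset.sum_congr rfl fun x _ => ?_
          rw [hconst x, hkey]; ring
      _ = (Fintype.card X : ℝ) * m := by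
          rw [Finset.sum_const, nsmul_eq_mul, Finset.card_univ, hum]
end

section
/- Let S ≥ 1, β > 0, λ ∈ ℝ, and let T be the map on nonnegative functions ρ : X × {1,…,S} → ℝ≥0 (X a finite set) given by (Tρ)(x,s) = exp(−β(Σ_{s'≠s} Σ_{x'} V(x,x') ρ(x',s') + ψ(x,s) − λ)), where V(x,x') ≥ 0, ψ(x,s) ≥ 0, and Σ_{x'} V(x,x') ≤ ε for every x. If β·ε·e^{βλ}·(S−1) < 1, then: (a) the set O = {ρ : 0 ≤ ρ(x,s) ≤ e^{βλ}} is invariant under T; (b) T is a contraction on O in the sup norm with Lipschitz constant at most β ε e^{βλ}(S−1); (c) T has a unique fixed point in O, and every fixed point of T with nonnegative values lies in O. -/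
open Finset

lemma stmt16_exp_diff_le {a b c : ℝ} (ha : a ≤ c) (hb : b ≤ c) :
    |Real.exp a - Real.exp b| ≤ Real.exp c * |a - b| := by
  rcases le_total a b with h | h
  · rw [abs_sub_comm, abs_of_nonneg (sub_nonneg.2 (Real.exp_le_exp.2 h)),
      abs_sub_comm, abs_of_nonneg (sub_nonneg.2 h)]
    have h1 := Real.add_one_le_exp (a - b)
    have h2 : Real.exp b * Real.exp (a - b) = Real.exp a := by
      rw [← Real.exp_add]; ring_nf
    nlinarith [Real.exp_pos b, Real.exp_le_exp.2 hb]
  · rw [abs_of_nonneg (sub_nonneg.2 (Real.exp_le_exp.2 h)),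
      abs_of_nonneg (sub_nonneg.2 h)]
    have h1 := Real.add_one_le_exp (b - a)
    have h2 : Real.exp a * Real.exp (b - a) = Real.exp b := by
      rw [← Real.exp_add]; ring_nf
    nlinarith [Real.exp_pos a, Real.exp_le_exp.2 ha]

theorem stmt16 {X : Type*} [Fintype X] (S : ℕ) (hS : 1 ≤ S)
    (β lam ε : ℝ) (hβ : 0 < β)
    (V : X → X → ℝ) (hV : ∀ x y, 0 ≤ V x y)
    (ψ : X → Fin S → ℝ) (hψ : ∀ x s, 0 ≤ ψ x s)
    (hε : ∀ x, ∑ y, V x y ≤ ε)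
    (hcontr : β * ε * Real.exp (β * lam) * ((S : ℝ) - 1) < 1)
    (T : (X → Fin S → ℝ) → (X → Fin S → ℝ))
    (hT : ∀ ρ x s, T ρ x s = Real.exp (-β *
      ((∑ s' ∈ univ.erase s, ∑ y, V x y * ρ y s') + ψ x s - lam)))
    (O : Set (X → Fin S → ℝ))
    (hO : O = {ρ | ∀ x s, 0 ≤ ρ x s ∧ ρ x s ≤ Real.exp (β * lam)}) :
    (∀ ρ ∈ O, T ρ ∈ O) ∧
    (∀ ρ ∈ O, ∀ σ ∈ O, ∀ x s,
      |T ρ x s - T σ x s| ≤ β * ε * Real.exp (β * lam) * ((S : ℝ) - 1) *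
        ⨆ p : X × Fin S, |ρ p.1 p.2 - σ p.1 p.2|) ∧
    (∃! ρ, ρ ∈ O ∧ T ρ = ρ) ∧
    (∀ ρ : X → Fin S → ℝ, (∀ x s, 0 ≤ ρ x s) → T ρ = ρ → ρ ∈ O) := by
  set K : ℝ := β * ε * Real.exp (β * lam) * ((S : ℝ) - 1) with hK
  -- exponent bound
  have hexp : ∀ (ρ : X → Fin S → ℝ), (∀ x s, 0 ≤ ρ x s) → ∀ x s,
      -β * ((∑ s' ∈ univ.erase s, ∑ y, V x y * ρ y s') + ψ x s - lam) ≤ β * lam := by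
    intro ρ hρ x s
    have hA : 0 ≤ ∑ s' ∈ univ.erase s, ∑ y, V x y * ρ y s' :=
      Finset.sum_nonneg fun s' _ => Finset.sum_nonneg fun y _ =>
        mul_nonneg (hV x y) (hρ y s')
    nlinarith [hψ x s]
  -- part (a) : invariance
  have hinv : ∀ ρ ∈ O, T ρ ∈ O := by
    intro ρ hρ
    rw [hO] at hρ ⊢
    intro x s
    rw [hT]
    exact ⟨(Real.exp_pos _).le, Real.exp_le_exp.2 (hexp ρ (fun x s => (hρ x s).1) x s)⟩
  -- key pointwise Lipschitz bound
  have key : ∀ (ρ σ : X → Fin S → ℝ), (∀ x s, 0 ≤ ρ x s) → (∀ x s, 0 ≤ σ x s) →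
      ∀ (M : ℝ), 0 ≤ M → (∀ y s', |ρ y s' - σ y s'| ≤ M) →
      ∀ x s, |T ρ x s - T σ x s| ≤ K * M := by
    intro ρ σ hρ hσ M hM hMb x s
    set a : ℝ := -β * ((∑ s' ∈ univ.erase s, ∑ y, V x y * ρ y s') + ψ x s - lam) with hadef
    set b : ℝ := -β * ((∑ s' ∈ univ.erase s, ∑ y, V x y * σ y s') + ψ x s - lam) with hbdef
    have ha : a ≤ β * lam := hexp ρ hρ x s
    have hb : b ≤ β * lam := hexp σ hσ x s
    rw [hT, hT]
    calc |Real.exp a - Real.exp b| ≤ Real.exp (β * lam) * |a - b| :=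
          stmt16_exp_diff_le ha hb
      _ ≤ K * M := by
          have hab : a - b = -β * ((∑ s' ∈ univ.erase s, ∑ y, V x y * ρ y s') -
              (∑ s' ∈ univ.erase s, ∑ y, V x y * σ y s')) := by
            rw [hadef, hbdef]; ring
          have hsum : |(∑ s' ∈ univ.erase s, ∑ y, V x y * ρ y s') -
              (∑ s' ∈ univ.erase s, ∑ y, V x y * σ y s')| ≤ ((S : ℝ) - 1) * (ε * M) := by
            rw [← Finset.sum_sub_distrib]
            calc |∑ s' ∈ univ.erase s, ((∑ y, V x y * ρ y s') - ∑ y, V x y * σ y s')|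
                ≤ ∑ s' ∈ univ.erase s, |(∑ y, V x y * ρ y s') - ∑ y, V x y * σ y s'| :=
                  Finset.abs_sum_le_sum_abs _ _
              _ ≤ ∑ s' ∈ (univ : Finset (Fin S)).erase s, (ε * M) := by
                  refine Finset.sum_le_sum fun s' _ => ?_
                  rw [← Finset.sum_sub_distrib]
                  calc |∑ y, (V x y * ρ y s' - V x y * σ y s')|
                      ≤ ∑ y, |V x y * ρ y s' - V x y * σ y s'| :=
                        Finset.abs_sum_le_sum_abs _ _
                    _ ≤ ∑ y, V x y * M := by
                        refine Finset.sum_le_sum fun y _ => ?_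
                        rw [← mul_sub, abs_mul, abs_of_nonneg (hV x y)]
                        exact mul_le_mul_of_nonneg_left (hMb y s') (hV x y)
                    _ = (∑ y, V x y) * M := by rw [Finset.sum_mul]
                    _ ≤ ε * M := mul_le_mul_of_nonneg_right (hε x) hM
              _ = ((S : ℝ) - 1) * (ε * M) := by
                  rw [Finset.sum_const, nsmul_eq_mul, Finset.card_erase_of_mem (mem_univ s),
                    Finset.card_univ, Fintype.card_fin, Nat.cast_sub hS, Nat.cast_one]
          have habs : |a - b| ≤ β * (((S : ℝ) - 1) * (ε * M)) := by
            rw [hab, abs_mul, abs_neg, abs_of_nonneg hβ.le]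
            exact mul_le_mul_of_nonneg_left hsum hβ.le
          calc Real.exp (β * lam) * |a - b|
              ≤ Real.exp (β * lam) * (β * (((S : ℝ) - 1) * (ε * M))) :=
                mul_le_mul_of_nonneg_left habs (Real.exp_pos _).le
            _ = K * M := by rw [hK]; ring
  -- part (b)
  have hb : ∀ ρ ∈ O, ∀ σ ∈ O, ∀ x s,
      |T ρ x s - T σ x s| ≤ K * ⨆ p : X × Fin S, |ρ p.1 p.2 - σ p.1 p.2| := by
    intro ρ hρ σ hσ x s
    rw [hO] at hρ hσ
    have hbdd : BddAbove (Set.range fun p : X × Fin S => |ρ p.1 p.2 - σ p.1 p.2|) :=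
      (Set.finite_range _).bddAbove
    have hMb : ∀ y s', |ρ y s' - σ y s'| ≤ ⨆ p : X × Fin S, |ρ p.1 p.2 - σ p.1 p.2| :=
      fun y s' => le_ciSup hbdd (y, s')
    exact key ρ σ (fun x s => (hρ x s).1) (fun x s => (hσ x s).1) _
      ((abs_nonneg _).trans (hMb x s)) hMb x s
  -- part (d)
  have hd : ∀ ρ : X → Fin S → ℝ, (∀ x s, 0 ≤ ρ x s) → T ρ = ρ → ρ ∈ O := by
    intro ρ hρ hfix
    rw [hO]
    intro x s
    refine ⟨hρ x s, ?_⟩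
    conv_lhs => rw [← hfix, hT]
    exact Real.exp_le_exp.2 (hexp ρ hρ x s)
  have hOmem : ∀ ρ ∈ O, ∀ x s, 0 ≤ ρ x s ∧ ρ x s ≤ Real.exp (β * lam) := by
    rw [hO]; exact fun ρ h => h
  refine ⟨hinv, hb, ?_, hd⟩
  -- part (c)
  have hO0 : (fun (_ : X) (_ : Fin S) => (0:ℝ)) ∈ O := by
    rw [hO]; intro x s; exact ⟨le_refl _, (Real.exp_pos _).le⟩
  cases isEmpty_or_nonempty X with
  | inl hempty =>
    refine ⟨fun _ _ => 0, ⟨hO0, funext fun x => hempty.elim x⟩,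
      fun σ _ => funext fun x => hempty.elim x⟩
  | inr hne =>
    obtain ⟨x₀⟩ := hne
    have hε0 : 0 ≤ ε := le_trans (Finset.sum_nonneg fun y _ => hV x₀ y) (hε x₀)
    have hK0 : 0 ≤ K := by
      have : (1:ℝ) ≤ (S:ℝ) := by exact_mod_cast hS
      have h1 : (0:ℝ) ≤ (S:ℝ) - 1 := by linarith
      positivity
    -- O is closed, hence complete
    have hclosed : IsClosed O := by
      rw [hO]
      have : {ρ : X → Fin S → ℝ | ∀ x s, 0 ≤ ρ x s ∧ ρ x s ≤ Real.exp (β * lam)} =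
          ⋂ (x : X) (s : Fin S), (fun ρ : X → Fin S → ℝ => ρ x s) ⁻¹'
            (Set.Icc 0 (Real.exp (β * lam))) := by
        ext ρ; simp [Set.mem_iInter, Set.mem_Icc]
      rw [this]
      exact isClosed_iInter fun x => isClosed_iInter fun s =>
        IsClosed.preimage ((continuous_apply s).comp (continuous_apply x)) isClosed_Icc
    haveI : CompleteSpace O := hclosed.isComplete.completeSpace_coe
    haveI : Nonempty O := ⟨⟨_, hO0⟩⟩
    set f : O → O := fun ρ => ⟨T ρ.1, hinv ρ.1 ρ.2⟩ with hf
    have hdistle : ∀ ρ σ : O, dist (f ρ) (f σ) ≤ K * dist ρ σ := by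
      intro ρ σ
      rw [Subtype.dist_eq]
      have hρ0 : ∀ x s, 0 ≤ ρ.1 x s := fun x s => (hOmem ρ.1 ρ.2 x s).1
      have hσ0 : ∀ x s, 0 ≤ σ.1 x s := fun x s => (hOmem σ.1 σ.2 x s).1
      have hMb : ∀ y s', |ρ.1 y s' - σ.1 y s'| ≤ dist ρ σ := by
        intro y s'
        calc |ρ.1 y s' - σ.1 y s'| = dist (ρ.1 y s') (σ.1 y s') := (Real.dist_eq _ _).symm
          _ ≤ dist (ρ.1 y) (σ.1 y) := dist_le_pi_dist _ _ _
          _ ≤ dist ρ.1 σ.1 := dist_le_pi_dist _ _ _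
          _ = dist ρ σ := (Subtype.dist_eq ρ σ).symm
      have hkey := key ρ.1 σ.1 hρ0 hσ0 (dist ρ σ) dist_nonneg hMb
      refine (dist_pi_le_iff (by positivity)).2 fun x => ?_
      refine (dist_pi_le_iff (by positivity)).2 fun s => ?_
      rw [Real.dist_eq]
      exact hkey x s
    have hC : ContractingWith K.toNNReal f := by
      constructor
      · exact Real.toNNReal_lt_one.2 hcontr
      · refine LipschitzWith.of_dist_le_mul fun ρ σ => ?_
        rw [Real.coe_toNNReal K hK0]
        exact hdistle ρ σ
    set ρ₀ : O := hC.fixedPoint f with hρ₀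
    have hfix : f ρ₀ = ρ₀ := hC.fixedPoint_isFixedPt
    refine ⟨ρ₀.1, ⟨ρ₀.2, congrArg Subtype.val hfix⟩, ?_⟩
    -- uniqueness
    intro σ ⟨hσO, hσfix⟩
    have hσ0 : ∀ x s, 0 ≤ σ x s := fun x s => (hOmem σ hσO x s).1
    have hρ₀0 : ∀ x s, 0 ≤ ρ₀.1 x s := fun x s => (hOmem ρ₀.1 ρ₀.2 x s).1
    set M : ℝ := dist σ ρ₀.1 with hM
    have hMb : ∀ y s', |σ y s' - ρ₀.1 y s'| ≤ M := by
      intro y s'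
      calc |σ y s' - ρ₀.1 y s'| = dist (σ y s') (ρ₀.1 y s') := (Real.dist_eq _ _).symm
        _ ≤ dist (σ y) (ρ₀.1 y) := dist_le_pi_dist _ _ _
        _ ≤ M := dist_le_pi_dist _ _ _
    have hkey := key σ ρ₀.1 hσ0 hρ₀0 M dist_nonneg hMb
    have hMle : M ≤ K * M := by
      rw [hM]
      refine (dist_pi_le_iff (by positivity)).2 fun x => ?_
      refine (dist_pi_le_iff (by positivity)).2 fun s => ?_
      rw [Real.dist_eq]
      have hfixv : T ρ₀.1 = ρ₀.1 := congrArg Subtype.val hfix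
      calc |σ x s - ρ₀.1 x s| = |T σ x s - T ρ₀.1 x s| := by rw [hσfix, hfixv]
        _ ≤ K * M := hkey x s
    have hM0 : M = 0 := by nlinarith [dist_nonneg (x := σ) (y := ρ₀.1)]
    exact dist_eq_zero.1 hM0
end
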